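/- The explicit formula d_{r,n}^B = 2^n * ∑_{i=0}^{r} C(r,i) * n^{\underline{i}} * 2^i * ∑_{k=0}^{n-i} C(n-i,k) * (-1)^k * (i+1)^{\overline{n-i-k}} * 2^{-k} holds, where d_{r,n}^B is defined by the recurrence d_{r,n}^B = d_{r-1,n}^B + 2n d_{r,n-1}^B + 2n d_{r-1,n-1}^B with d_{r,0}^B = 1 and d_{0,n}^B = n! ∑_{k=0}^n (-1)^k 2^{n-k}/k!. -/

import Mathlib

open Finset

/-- `d_{r,n}^B`, defined by the recurrence
`d_{r,n} = d_{r-1,n} + 2n d_{r,n-1} + 2n d_{r-1,n-1}` with `d_{r,0} = 1` and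
`d_{0,n} = n! ∑_{k=0}^n (-1)^k 2^{n-k}/k!`. -/
def dRec : ℕ → ℕ → ℚ
  | _, 0 => 1
  | 0, n + 1 =>
      ((n + 1).factorial : ℚ) *
        ∑ k ∈ Finset.range (n + 2), (-1 : ℚ) ^ k * 2 ^ (n + 1 - k) / (k.factorial : ℚ)
  | r + 1, n + 1 =>
      dRec r (n + 1) + 2 * (n + 1) * dRec (r + 1) n + 2 * (n + 1) * dRec r n
  termination_by r n => (r, n)

def g (i m : ℕ) : ℚ :=
  ∑ k ∈ Finset.range (m + 1),
    (m.choose k : ℚ) * (-1) ^ k * ((i + 1).ascFactorial (m - k)) / 2 ^ k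

lemma g_zero (i : ℕ) : g i 0 = 1 := by simp [g]

lemma asc_step (i s : ℕ) :
    (((i + 2).ascFactorial s : ℕ) : ℚ)
      = ((i + 1).ascFactorial s : ℕ) + (s : ℚ) * (((i + 2).ascFactorial (s - 1) : ℕ) : ℚ) := by
  cases s with
  | zero => simp
  | succ t =>
    have h1 : ((i + 1) * (i + 2).ascFactorial (t + 1) : ℕ)
        = ((i + 1 + (t + 1)) * (i + 1).ascFactorial (t + 1) : ℕ) :=
      Nat.succ_ascFactorial (i + 1) (t + 1)
    have h2 : ((i + 1) * (i + 2).ascFactorial t : ℕ)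
        = ((i + 1 + t) * (i + 1).ascFactorial t : ℕ) := Nat.succ_ascFactorial (i + 1) t
    have h3 : ((i + 1).ascFactorial (t + 1) : ℕ) = (i + 1 + t) * (i + 1).ascFactorial t :=
      Nat.ascFactorial_succ
    have h1' : ((i:ℚ) + 1) * ((i + 2).ascFactorial (t + 1) : ℕ)
        = ((i:ℚ) + 1 + (t + 1)) * ((i + 1).ascFactorial (t + 1) : ℕ) := by exact_mod_cast h1
    have h2' : ((i:ℚ) + 1) * ((i + 2).ascFactorial t : ℕ)
        = ((i:ℚ) + 1 + t) * ((i + 1).ascFactorial t : ℕ) := by exact_mod_cast h2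
    have h3' : (((i + 1).ascFactorial (t + 1) : ℕ) : ℚ)
        = ((i:ℚ) + 1 + t) * ((i + 1).ascFactorial t : ℕ) := by exact_mod_cast h3
    have hi : ((i:ℚ) + 1) ≠ 0 := by positivity
    apply mul_left_cancel₀ hi
    simp only [Nat.add_sub_cancel, Nat.cast_succ]
    linear_combination h1' - ((t:ℚ) + 1) * h2' + ((t:ℚ) + 1) * h3'

lemma g_rec (i m : ℕ) : g (i + 1) m = g i m + (m : ℚ) * g (i + 1) (m - 1) := by
  cases m with
  | zero => simp [g_zero]
  | succ s =>
    simp only [Nat.add_sub_cancel, Nat.cast_succ]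
    rw [g, g, g]
    rw [Finset.mul_sum]
    have hext : ∑ k ∈ Finset.range (s + 2),
        ((s:ℚ) + 1) * ((s.choose k : ℚ) * (-1) ^ k * ((i + 2).ascFactorial (s - k)) / 2 ^ k)
        = ∑ k ∈ Finset.range (s + 1),
        ((s:ℚ) + 1) * ((s.choose k : ℚ) * (-1) ^ k * ((i + 2).ascFactorial (s - k)) / 2 ^ k) := by
      rw [Finset.sum_range_succ, Nat.choose_succ_self]
      simp
    rw [← hext, ← Finset.sum_add_distrib]
    apply Finset.sum_congr rfl
    intro k hk
    have hk' : k ≤ s + 1 := by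
      simp only [Finset.mem_range] at hk; omega
    have hasc := asc_step i (s + 1 - k)
    have hidx : s + 1 - k - 1 = s - k := by omega
    rw [hidx] at hasc
    have hca : ((s + 1).choose k : ℚ) * ((s + 1 - k : ℕ) : ℚ)
        = (s.choose k : ℚ) * ((s : ℚ) + 1) := by
      exact_mod_cast (Nat.choose_mul_succ_eq s k).symm
    have hw : ((s + 1 - k : ℕ) : ℚ) = (s : ℚ) + 1 - k := by
      push_cast [Nat.cast_sub hk']; ring
    rw [hw] at hasc hca
    show ((s+1).choose k : ℚ) * (-1) ^ k * (((i + 2)).ascFactorial (s + 1 - k)) / 2 ^ k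
      = (((s+1).choose k : ℚ) * (-1) ^ k * ((i + 1).ascFactorial (s + 1 - k)) / 2 ^ k)
        + ((s:ℚ) + 1) * ((s.choose k : ℚ) * (-1) ^ k * (((i + 2)).ascFactorial (s - k)) / 2 ^ k)
    have h2k : ((2:ℚ)) ^ k ≠ 0 := by positivity
    linear_combination ((-1:ℚ)) ^ k / 2 ^ k * (((s+1).choose k : ℚ) * hasc
      + (((i + 2).ascFactorial (s - k) : ℕ) : ℚ) * hca)

lemma pascal_split (r : ℕ) (t : ℕ → ℚ) :
    ∑ i ∈ Finset.range (r + 2), ((r + 1).choose i : ℚ) * t i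
      = ∑ i ∈ Finset.range (r + 1), (r.choose i : ℚ) * t i
        + ∑ j ∈ Finset.range (r + 1), (r.choose j : ℚ) * t (j + 1) := by
  rw [Finset.sum_range_succ' (fun i => ((r + 1).choose i : ℚ) * t i) (r + 1)]
  rw [Finset.sum_range_succ' (fun i => ((r).choose i : ℚ) * t i) r]
  simp only [Nat.choose_succ_succ, Nat.cast_add, add_mul, Finset.sum_add_distrib]
  rw [Finset.sum_range_succ (fun j => ((r).choose (j + 1) : ℚ) * t (j + 1)) r]
  simp only [Nat.choose_succ_self, Nat.cast_zero, Nat.choose_zero_right, Nat.cast_one, zero_mul,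
    add_zero, one_mul]
  ring

lemma key (n j : ℕ) :
    2 * 2 ^ j * (n.descFactorial j : ℚ) * g (j + 1) (n - j)
      = 2 * ((n.descFactorial j : ℚ) * 2 ^ j * g j (n - j))
        + (n.descFactorial (j + 1) : ℚ) * 2 ^ (j + 1) * g (j + 1) (n - j - 1) := by
  have hd : (n.descFactorial (j + 1) : ℚ) = ((n - j : ℕ) : ℚ) * (n.descFactorial j : ℚ) := by
    exact_mod_cast Nat.descFactorial_succ n j
  have hg := g_rec j (n - j)
  linear_combination (2 * 2 ^ j * (n.descFactorial j : ℚ)) * hg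
    - 2 ^ (j + 1) * g (j + 1) (n - j - 1) * hd

def F (r n : ℕ) : ℚ :=
  2 ^ n * ∑ i ∈ Finset.range (r + 1),
    (r.choose i : ℚ) * ((n.descFactorial i : ℚ) * 2 ^ i * g i (n - i))

lemma F_zero (r : ℕ) : F r 0 = 1 := by
  rw [F]
  rw [Finset.sum_eq_single 0]
  · simp [g_zero]
  · intro i hi hne
    obtain ⟨j, rfl⟩ := Nat.exists_eq_succ_of_ne_zero hne
    simp [Nat.zero_descFactorial_succ]
  · intro h
    simp at h

lemma F_base (n : ℕ) :
    ((n + 1).factorial : ℚ) *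
        ∑ k ∈ Finset.range (n + 2), (-1 : ℚ) ^ k * 2 ^ (n + 1 - k) / (k.factorial : ℚ)
      = F 0 (n + 1) := by
  rw [F, Finset.sum_range_one]
  simp only [Nat.choose_self, Nat.cast_one, Nat.descFactorial_zero, one_mul, pow_zero, mul_one,
    Nat.sub_zero]
  rw [g, Finset.mul_sum, Finset.mul_sum]
  apply Finset.sum_congr rfl
  intro k hk
  have hk' : k ≤ n + 1 := by simp only [Finset.mem_range] at hk; omega
  have hck : ((n + 1).choose k * k.factorial * (n + 1 - k).factorial : ℕ) = (n + 1).factorial :=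
    Nat.choose_mul_factorial_mul_factorial hk'
  have h1 : ((n + 1).factorial : ℚ)
      = ((n + 1).choose k : ℚ) * (k.factorial : ℚ) * ((n + 1 - k).factorial : ℚ) := by
    exact_mod_cast hck.symm
  have hasc : ((0 + 1).ascFactorial (n + 1 - k) : ℕ) = (n + 1 - k).factorial :=
    Nat.one_ascFactorial _
  have hp : (2:ℚ) ^ (n + 1) = 2 ^ (n + 1 - k) * 2 ^ k := by
    rw [← pow_add]; congr 1; omega
  rw [hasc, h1, hp]
  have hf1 : (k.factorial : ℚ) ≠ 0 := by positivity
  have hq : (2:ℚ) ^ k ≠ 0 := by positivity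
  field_simp

lemma F_rec (r n : ℕ) :
    F (r + 1) (n + 1) = F r (n + 1) + 2 * ((n : ℚ) + 1) * F (r + 1) n
      + 2 * ((n : ℚ) + 1) * F r n := by
  have hterm : ∀ j, ((n + 1).descFactorial (j + 1) : ℚ) * 2 ^ (j + 1) * g (j + 1) (n + 1 - (j + 1))
      = ((n : ℚ) + 1) * (2 * ((n.descFactorial j : ℚ) * 2 ^ j * g j (n - j))
          + (n.descFactorial (j + 1) : ℚ) * 2 ^ (j + 1) * g (j + 1) (n - j - 1)) := by
    intro j
    have hds : ((n + 1).descFactorial (j + 1) : ℚ) = ((n : ℚ) + 1) * (n.descFactorial j : ℚ) := by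
      exact_mod_cast Nat.succ_descFactorial_succ n j
    have hidx : n + 1 - (j + 1) = n - j := by omega
    rw [hidx, hds, ← key n j]
    ring
  have h1 := pascal_split r (fun i => (((n + 1).descFactorial i : ℚ)) * 2 ^ i * g i (n + 1 - i))
  have h2 := pascal_split r (fun i => ((n.descFactorial i : ℚ)) * 2 ^ i * g i (n - i))
  simp only [F]
  rw [h1]
  have h3 : ∑ j ∈ Finset.range (r + 1), (r.choose j : ℚ) *
      (((n + 1).descFactorial (j + 1) : ℚ) * 2 ^ (j + 1) * g (j + 1) (n + 1 - (j + 1)))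
      = ((n : ℚ) + 1) * (2 * ∑ j ∈ Finset.range (r + 1), (r.choose j : ℚ) *
          ((n.descFactorial j : ℚ) * 2 ^ j * g j (n - j))
        + ∑ j ∈ Finset.range (r + 1), (r.choose j : ℚ) *
          ((n.descFactorial (j + 1) : ℚ) * 2 ^ (j + 1) * g (j + 1) (n - j - 1))) := by
    conv_rhs => rw [Finset.mul_sum, ← Finset.sum_add_distrib, Finset.mul_sum]
    apply Finset.sum_congr rfl
    intro j _
    rw [hterm j]
    ring
  rw [h3, h2]
  have hij : ∀ j : ℕ, n - (j + 1) = n - j - 1 := fun j => by omega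
  simp only [hij]
  ring

theorem dRec_eq_F (r : ℕ) : ∀ n, dRec r n = F r n := by
  induction r with
  | zero =>
    intro n
    cases n with
    | zero => rw [F_zero]; rw [dRec]
    | succ n => rw [dRec, F_base]
  | succ r ih =>
    intro n
    induction n with
    | zero => rw [F_zero]; rw [dRec]
    | succ n ihn =>
      rw [dRec, ih (n + 1), ihn, ih n, F_rec]

/-- The explicit formula for `d_{r,n}^B`. -/
theorem dRec_explicit (r n : ℕ) :
    dRec r n =
      2 ^ n * ∑ i ∈ Finset.range (r + 1),
        (r.choose i : ℚ) * (n.descFactorial i) * 2 ^ i *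
          ∑ k ∈ Finset.range (n - i + 1),
            ((n - i).choose k : ℚ) * (-1) ^ k * ((i + 1).ascFactorial (n - i - k)) / 2 ^ k := by
  rw [dRec_eq_F r n, F]
  congr 1
  apply Finset.sum_congr rfl
  intro i _
  rw [g]
  ring
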